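/- Let a ∈ ℝ and b ∈ ℝ ∪ {+∞} with a < b, let m : [a,b) → ℝ be strictly increasing, continuous from the right at a, differentiable on (a,b) with derivative bounded on every closed subinterval [a',b'] ⊂ (a,b), and satisfying m(x) → +∞ as x → b⁻. Let f : [a,b) → [0,∞) be Riemann integrable on compact subintervals with sup_{[a,b)} f < +∞ and f(x) → 0 as x → b⁻. Then the function R ↦ A_m(a,R; m^→[f]) is decreasing on (a,b). -/

import Mathlib

open MeasureTheory Set Filter

/-- The integral average `A_m(r,R;f) = (1/(m R - m r)) ∫_r^R f dm`, where the
Riemann–Stieltjes integral `∫_r^R f dm` is expressed as `∫_r^R f(x) m'(x) dx`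
(valid since `m` is differentiable with locally bounded derivative). -/
noncomputable def intAvg (m f : ℝ → ℝ) (r R : ℝ) : ℝ :=
  (m R - m r)⁻¹ * ∫ x in r..R, f x * deriv m x

/-- The right maximization `m^→[f](r) = sup_{x ∈ [r,b)} f x`, for `b ∈ ℝ ∪ {+∞}`. -/
noncomputable def rightMax (b : EReal) (f : ℝ → ℝ) (r : ℝ) : ℝ :=
  sSup (f '' {x : ℝ | r ≤ x ∧ (x : EReal) < b})

/-- The filter of real numbers tending to `b ∈ ℝ ∪ {+∞}` from the left. -/
noncomputable def toBFilter (b : EReal) : Filter ℝ :=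
  Filter.comap (Real.toEReal) (nhdsWithin b (Set.Iio b))

theorem stmt_5 (a : ℝ) (b : EReal) (hab : (a : EReal) < b) (m f : ℝ → ℝ)
    (hm_mono : StrictMonoOn m {x : ℝ | a ≤ x ∧ (x : EReal) < b})
    (hm_rc : ContinuousWithinAt m (Set.Ici a) a)
    (hm_diff : ∀ x : ℝ, a < x → (x : EReal) < b → DifferentiableAt ℝ m x)
    (hm_bdd : ∀ a' b' : ℝ, a < a' → a' ≤ b' → (b' : EReal) < b →
      ∃ C : ℝ, ∀ x ∈ Set.Icc a' b', |deriv m x| ≤ C)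
    (hm_top : Filter.Tendsto m (toBFilter b) Filter.atTop)
    (hf_nonneg : ∀ x : ℝ, a ≤ x → (x : EReal) < b → 0 ≤ f x)
    (hf_int : ∀ c d : ℝ, a ≤ c → c ≤ d → (d : EReal) < b →
      IntervalIntegrable f MeasureTheory.volume c d)
    (hf_bdd : ∃ C : ℝ, ∀ x : ℝ, a ≤ x → (x : EReal) < b → f x ≤ C)
    (hf_zero : Filter.Tendsto f (toBFilter b) (nhds 0)) :
    ∀ R₁ R₂ : ℝ, a < R₁ → R₁ ≤ R₂ → (R₂ : EReal) < b →
      intAvg m (rightMax b f) a R₂ ≤ intAvg m (rightMax b f) a R₁ := by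
  intro R₁ R₂ hR₁ hR12 hR₂b
  obtain ⟨C, hC⟩ := hf_bdd
  set g := rightMax b f with hg_def
  obtain ⟨R₃, hR₂R₃, hR₃b⟩ := EReal.exists_between_coe_real hR₂b
  rw [EReal.coe_lt_coe_iff] at hR₂R₃
  have haR₂ : a ≤ R₂ := hR₁.le.trans hR12
  have haR₁ : a ≤ R₁ := hR₁.le
  -- membership in the domain
  have hmem : ∀ x : ℝ, a ≤ x → x ≤ R₂ → x ∈ {x : ℝ | a ≤ x ∧ (x : EReal) < b} :=
    fun x hax hxR => ⟨hax, lt_of_le_of_lt (EReal.coe_le_coe_iff.mpr hxR) hR₂b⟩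
  have hmem3 : ∀ x : ℝ, a ≤ x → x ≤ R₃ → x ∈ {x : ℝ | a ≤ x ∧ (x : EReal) < b} :=
    fun x hax hxR => ⟨hax, lt_of_le_of_lt (EReal.coe_le_coe_iff.mpr hxR) hR₃b⟩
  -- basic facts about g = rightMax b f
  have hbdd : ∀ r : ℝ, a ≤ r → BddAbove (f '' {x : ℝ | r ≤ x ∧ (x : EReal) < b}) := by
    intro r har
    refine ⟨C, ?_⟩
    rintro _ ⟨x, ⟨hx1, hx2⟩, rfl⟩
    exact hC x (har.trans hx1) hx2
  have hne : ∀ r : ℝ, (r : EReal) < b →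
      (f '' {x : ℝ | r ≤ x ∧ (x : EReal) < b}).Nonempty :=
    fun r hr => ⟨f r, r, ⟨le_refl r, hr⟩, rfl⟩
  have hgC : ∀ r : ℝ, a ≤ r → (r : EReal) < b → g r ≤ C := by
    intro r har hrb
    refine csSup_le (hne r hrb) ?_
    rintro _ ⟨x, ⟨hx1, hx2⟩, rfl⟩
    exact hC x (har.trans hx1) hx2
  have hg0 : ∀ r : ℝ, a ≤ r → (r : EReal) < b → 0 ≤ g r := by
    intro r har hrb
    exact (hf_nonneg r har hrb).trans (le_csSup (hbdd r har) ⟨r, ⟨le_refl r, hrb⟩, rfl⟩)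
  have hg_anti : ∀ r s : ℝ, a ≤ r → r ≤ s → (s : EReal) < b → g s ≤ g r := by
    intro r s har hrs hsb
    refine csSup_le_csSup (hbdd r har) (hne s hsb) (image_mono ?_)
    rintro x ⟨hx1, hx2⟩
    exact ⟨hrs.trans hx1, hx2⟩
  -- measurable antitone clamp
  set G : ℝ → ℝ := fun x => g (min (max x a) R₂) with hG_def
  have hclamp : ∀ x : ℝ, a ≤ min (max x a) R₂ ∧ min (max x a) R₂ ≤ R₂ :=
    fun x => ⟨le_min (le_max_right x a) haR₂, min_le_right _ _⟩
  have hG_anti : Antitone G := by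
    intro x y hxy
    exact hg_anti _ _ (hclamp x).1
      (min_le_min (max_le_max hxy (le_refl a)) (le_refl R₂))
      (lt_of_le_of_lt (EReal.coe_le_coe_iff.mpr (hclamp y).2) hR₂b)
  have hG_meas : Measurable G := hG_anti.measurable
  have hGg : ∀ x : ℝ, a ≤ x → x ≤ R₂ → G x = g x := by
    intro x hax hxR
    simp only [hG_def, max_eq_left hax, min_eq_left hxR]
  -- derivative facts
  have hm'_meas : Measurable (deriv m) := measurable_deriv m
  have hm'_nonneg : ∀ x ∈ Ioo a R₃, 0 ≤ deriv m x := by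
    intro x hx
    have hd := (hm_diff x hx.1 (hmem3 x hx.1.le hx.2.le).2).hasDerivAt
    rw [hasDerivAt_iff_tendsto_slope] at hd
    refine ge_of_tendsto hd ?_
    have hIoo : Ioo a R₃ \ {x} ∈ nhdsWithin x {x}ᶜ := by
      refine inter_mem (mem_nhdsWithin_of_mem_nhds (Ioo_mem_nhds hx.1 hx.2)) ?_
      exact self_mem_nhdsWithin
    filter_upwards [hIoo] with y hy
    rw [slope_def_field]
    have hyD := hmem3 y hy.1.1.le hy.1.2.le
    have hxD := hmem3 x hx.1.le hx.2.le
    rcases lt_or_gt_of_ne (fun h : y = x => hy.2 h) with h | h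
    · rw [div_nonneg_iff]
      right
      exact ⟨sub_nonpos.mpr ((hm_mono.monotoneOn) hyD hxD h.le), sub_nonpos.mpr h.le⟩
    · exact div_nonneg (sub_nonneg.mpr ((hm_mono.monotoneOn) hxD hyD h.le))
        (sub_nonneg.mpr h.le)
  have hcont : ContinuousOn m (Icc a R₃) := by
    intro x hx
    rcases eq_or_lt_of_le hx.1 with h | h
    · rw [← h]
      exact hm_rc.mono Icc_subset_Ici_self
    · exact ((hm_diff x h (hmem3 x hx.1 hx.2).2).continuousAt).continuousWithinAt
  have hm'_intOn : IntegrableOn (deriv m) (Ioc a R₃) volume := by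
    refine intervalIntegral.integrableOn_deriv_of_nonneg hcont ?_ hm'_nonneg
    intro x hx
    exact (hm_diff x hx.1 (hmem3 x hx.1.le hx.2.le).2).hasDerivAt
  -- FTC
  have key : ∀ c d : ℝ, a ≤ c → c ≤ d → d ≤ R₃ →
      ∫ y in c..d, deriv m y = m d - m c := by
    intro c d hac hcd hdR₃
    refine intervalIntegral.integral_eq_sub_of_hasDeriv_right_of_le hcd
      (hcont.mono (Icc_subset_Icc hac hdR₃)) ?_ ?_
    · intro x hx
      exact ((hm_diff x (lt_of_le_of_lt hac hx.1)
        (hmem3 x (hac.trans hx.1.le) (hx.2.le.trans hdR₃)).2).hasDerivAt).hasDerivWithinAt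
    · exact (intervalIntegrable_iff_integrableOn_Ioc_of_le hcd).mpr
        (hm'_intOn.mono_set (Ioc_subset_Ioc hac hdR₃))
  -- integrability of g * m'
  have hgm_int : ∀ c d : ℝ, a ≤ c → c ≤ d → d ≤ R₂ →
      IntegrableOn (fun x => g x * deriv m x) (Ioc c d) volume := by
    intro c d hac hcd hdR₂
    have hmaj : Integrable (fun x => C * deriv m x) (volume.restrict (Ioc c d)) :=
      (hm'_intOn.mono_set (Ioc_subset_Ioc hac (hdR₂.trans hR₂R₃.le))).const_mul C
    have hGm : IntegrableOn (fun x => G x * deriv m x) (Ioc c d) volume := by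
      refine hmaj.mono' ((hG_meas.mul hm'_meas).aestronglyMeasurable) ?_
      rw [ae_restrict_iff' measurableSet_Ioc]
      filter_upwards with x hx
      have hax : a ≤ x := hac.trans hx.1.le
      have hxR : x ≤ R₂ := hx.2.trans hdR₂
      have hm'x : 0 ≤ deriv m x :=
        hm'_nonneg x ⟨lt_of_le_of_lt hac hx.1, lt_of_le_of_lt hxR hR₂R₃⟩
      have hxb : (x : EReal) < b := (hmem x hax hxR).2
      rw [hGg x hax hxR, Real.norm_eq_abs,
        abs_of_nonneg (mul_nonneg (hg0 x hax hxb) hm'x)]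
      exact mul_le_mul_of_nonneg_right (hgC x hax hxb) hm'x
    refine hGm.congr_fun ?_ measurableSet_Ioc
    intro x hx
    simp only
    rw [hGg x (hac.trans hx.1.le) (hx.2.trans hdR₂)]
  -- the two key integral inequalities
  have hR₁b : (R₁ : EReal) < b := (hmem R₁ haR₁ hR12).2
  have hJ₁ : g R₁ * (m R₁ - m a) ≤ ∫ x in a..R₁, g x * deriv m x := by
    have h1 : ∫ x in a..R₁, g R₁ * deriv m x = g R₁ * (m R₁ - m a) := by
      rw [intervalIntegral.integral_const_mul, key a R₁ (le_refl a) haR₁ (hR12.trans hR₂R₃.le)]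
    rw [← h1, intervalIntegral.integral_of_le haR₁, intervalIntegral.integral_of_le haR₁]
    refine setIntegral_mono_on ?_ (hgm_int a R₁ (le_refl a) haR₁ hR12) measurableSet_Ioc ?_
    · exact (hm'_intOn.mono_set (Ioc_subset_Ioc (le_refl a)
        (hR12.trans hR₂R₃.le))).const_mul (g R₁)
    · intro x hx
      have hm'x : 0 ≤ deriv m x := hm'_nonneg x ⟨hx.1, lt_of_le_of_lt (hx.2.trans hR12) hR₂R₃⟩
      exact mul_le_mul_of_nonneg_right
        (hg_anti x R₁ hx.1.le hx.2 hR₁b) hm'x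
  have hJ₂ : (∫ x in R₁..R₂, g x * deriv m x) ≤ g R₁ * (m R₂ - m R₁) := by
    have h1 : ∫ x in R₁..R₂, g R₁ * deriv m x = g R₁ * (m R₂ - m R₁) := by
      rw [intervalIntegral.integral_const_mul, key R₁ R₂ haR₁ hR12 hR₂R₃.le]
    rw [← h1, intervalIntegral.integral_of_le hR12, intervalIntegral.integral_of_le hR12]
    refine setIntegral_mono_on (hgm_int R₁ R₂ haR₁ hR12 (le_refl R₂)) ?_ measurableSet_Ioc ?_
    · exact (hm'_intOn.mono_set (Ioc_subset_Ioc haR₁ hR₂R₃.le)).const_mul (g R₁)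
    · intro x hx
      have hm'x : 0 ≤ deriv m x :=
        hm'_nonneg x ⟨lt_of_le_of_lt haR₁ hx.1, lt_of_le_of_lt hx.2 hR₂R₃⟩
      exact mul_le_mul_of_nonneg_right
        (hg_anti R₁ x haR₁ hx.1.le (hmem x (haR₁.trans hx.1.le) hx.2).2) hm'x
  -- split the integral
  have hsplit : ∫ x in a..R₂, g x * deriv m x =
      (∫ x in a..R₁, g x * deriv m x) + ∫ x in R₁..R₂, g x * deriv m x := by
    rw [intervalIntegral.integral_add_adjacent_intervals
      ((intervalIntegrable_iff_integrableOn_Ioc_of_le haR₁).mpr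
        (hgm_int a R₁ (le_refl a) haR₁ hR12))
      ((intervalIntegrable_iff_integrableOn_Ioc_of_le hR12).mpr
        (hgm_int R₁ R₂ haR₁ hR12 (le_refl R₂)))]
  -- arithmetic
  have hM₁ : 0 < m R₁ - m a :=
    sub_pos.mpr (hm_mono (hmem a (le_refl a) haR₂) (hmem R₁ haR₁ hR12) hR₁)
  have hM₂ : 0 ≤ m R₂ - m R₁ :=
    sub_nonneg.mpr ((hm_mono.monotoneOn) (hmem R₁ haR₁ hR12) (hmem R₂ haR₂ (le_refl R₂)) hR12)
  have hM : 0 < m R₂ - m a := by linarith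
  have hc0 : 0 ≤ g R₁ := hg0 R₁ haR₁ hR₁b
  show (m R₂ - m a)⁻¹ * ∫ x in a..R₂, g x * deriv m x ≤
      (m R₁ - m a)⁻¹ * ∫ x in a..R₁, g x * deriv m x
  rw [hsplit, ← div_eq_inv_mul, ← div_eq_inv_mul, div_le_div_iff₀ hM hM₁]
  nlinarith [mul_le_mul_of_nonneg_right hJ₂ hM₁.le, mul_le_mul_of_nonneg_right hJ₁ hM₂]
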